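/- Let I be a set, I₊ ⊆ I a subset, and f, g : I → I two bijections, each satisfying: f(I₊) ⊆ I₊, ⋃_{i∈ℤ} f^i(I₊) = I, ⋂_{i∈ℤ} f^i(I₊) = ∅ (and the same three conditions for g), and suppose f∘g = g∘f. Then for any integers a, b > 0, the sets I(f,0), I(f,1), …, I(f,a−1), I(g,−b), I(g,−b+1), …, I(g,−1) are pairwise disjoint and their union is a cross-section for the orbits of the bijection f^a∘g^b on I. -/

import Mathlib

/-- The set `I(f,i) = f^i(S) \ f^{i+1}(S)` for a bijection `f` of `I` and `S ⊆ I`. -/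
def crossSec {I : Type*} (f : Equiv.Perm I) (S : Set I) (i : ℤ) : Set I :=
  (⇑(f ^ i) '' S) \ (⇑(f ^ (i + 1)) '' S)

section
variable {I : Type*} (S : Set I)

lemma pow_image_subset' (p : Equiv.Perm I) (hp : ⇑p '' S ⊆ S) :
    ∀ n : ℕ, ⇑(p ^ n) '' S ⊆ S := by
  intro n
  induction n with
  | zero => simp
  | succ n ih =>
    rw [pow_succ, Equiv.Perm.coe_mul, Set.image_comp]
    exact (Set.image_mono hp).trans ih

lemma zpow_anti' (p : Equiv.Perm I) (hp : ⇑p '' S ⊆ S) {i j : ℤ} (hij : i ≤ j) :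
    ⇑(p ^ j) '' S ⊆ ⇑(p ^ i) '' S := by
  have h1 : p ^ j = p ^ i * p ^ ((j - i).toNat : ℤ) := by
    rw [← zpow_add]; congr 1; omega
  have h2 : ⇑(p ^ ((j - i).toNat : ℤ)) '' S ⊆ S := by
    rw [zpow_natCast]; exact pow_image_subset' S p hp _
  rw [h1, Equiv.Perm.coe_mul, Set.image_comp]
  exact Set.image_mono h2

lemma mem_S_of_nonneg (p : Equiv.Perm I) (hp : ⇑p '' S ⊆ S) {i : ℤ} (hi : 0 ≤ i) :
    ⇑(p ^ i) '' S ⊆ S := by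
  have := zpow_anti' S p hp hi
  simpa using this

lemma S_subset_of_nonpos (p : Equiv.Perm I) (hp : ⇑p '' S ⊆ S) {i : ℤ} (hi : i ≤ 0) :
    S ⊆ ⇑(p ^ i) '' S := by
  have := zpow_anti' S p hp hi
  simpa using this

lemma step_lemma (f g : Equiv.Perm I) (hg1 : ⇑g '' S ⊆ S)
    (hcomm : f * g = g * f) (a b : ℤ) (hb : 0 ≤ b) (i : ℤ) {x : I}
    (hx : x ∈ ⇑(f ^ i) '' S) : (f ^ a * g ^ b) x ∈ ⇑(f ^ (i + a)) '' S := by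
  obtain ⟨s, hs, rfl⟩ := hx
  have hc : Commute (g ^ b) (f ^ i) := (Commute.symm hcomm).zpow_zpow b i
  have h1 : (f ^ a * g ^ b) ((f ^ i) s) = (f ^ (i + a)) ((g ^ b) s) := by
    have : f ^ a * g ^ b * f ^ i = f ^ (i + a) * g ^ b := by
      rw [mul_assoc, hc.eq, ← mul_assoc, ← zpow_add]
      congr 1; ring
    calc (f ^ a * g ^ b) ((f ^ i) s) = (f ^ a * g ^ b * f ^ i) s := rfl
      _ = (f ^ (i + a) * g ^ b) s := by rw [this]
      _ = (f ^ (i + a)) ((g ^ b) s) := rfl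
  rw [h1]
  have hgs : (g ^ b) s ∈ S := mem_S_of_nonneg S g hg1 hb (Set.mem_image_of_mem _ hs)
  exact Set.mem_image_of_mem _ hgs

lemma iter_step (f g : Equiv.Perm I) (hg1 : ⇑g '' S ⊆ S)
    (hcomm : f * g = g * f) (a b : ℤ) (hb : 0 ≤ b) (i : ℤ) {x : I}
    (hx : x ∈ ⇑(f ^ i) '' S) :
    ∀ n : ℕ, ((f ^ a * g ^ b) ^ n) x ∈ ⇑(f ^ (i + n * a)) '' S := by
  intro n
  induction n with
  | zero => simpa using hx
  | succ n ih =>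
    have h1 : ((f ^ a * g ^ b) ^ (n + 1)) x = (f ^ a * g ^ b) (((f ^ a * g ^ b) ^ n) x) := by
      rw [pow_succ']; rfl
    rw [h1, show i + ((n + 1 : ℕ) : ℤ) * a = i + (n : ℤ) * a + a by push_cast; ring]
    exact step_lemma S f g hg1 hcomm a b hb _ ih

lemma boundary (p : Equiv.Perm I) (hp : ⇑p '' S ⊆ S) {lo hi : ℤ} {y : I}
    (h1 : y ∈ ⇑(p ^ lo) '' S) (h2 : y ∉ ⇑(p ^ hi) '' S) :
    ∃ i ∈ Set.Ico lo hi, y ∈ crossSec p S i := by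
  classical
  have hlow : ∀ z : ℤ, (y ∉ ⇑(p ^ (z + 1)) '' S) → lo ≤ z := by
    intro z hz
    by_contra hc
    exact hz (zpow_anti' S p hp (by omega) h1)
  have hinh : ∃ z : ℤ, y ∉ ⇑(p ^ (z + 1)) '' S := ⟨hi - 1, by rwa [sub_add_cancel]⟩
  obtain ⟨i₀, hT, hleast⟩ := Int.exists_least_of_bdd ⟨lo, hlow⟩ hinh
  have hup : i₀ ≤ hi - 1 := hleast (hi - 1) (by rwa [sub_add_cancel])
  have hPi : y ∈ ⇑(p ^ i₀) '' S := by
    by_contra hc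
    have : y ∉ ⇑(p ^ (i₀ - 1 + 1)) '' S := by rwa [sub_add_cancel]
    have := hleast _ this
    omega
  exact ⟨i₀, ⟨hlow i₀ hT, by omega⟩, hPi, hT⟩
end

/-- Let `f, g` be commuting bijections of `I`, each satisfying
`h(S) ⊆ S`, `⋃_{i∈ℤ} h^i(S) = I`, `⋂_{i∈ℤ} h^i(S) = ∅`.  Then for `a, b > 0` the sets
`I(f,0), …, I(f,a−1), I(g,−b), …, I(g,−1)` are pairwise disjoint, and their union is a
cross-section for the orbits of `f^a ∘ g^b` on `I`. -/
theorem crossSection_of_product {I : Type*} (S : Set I) (f g : Equiv.Perm I)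
    (hf1 : ⇑f '' S ⊆ S)
    (hf2 : (⋃ i : ℤ, ⇑(f ^ i) '' S) = Set.univ)
    (hf3 : (⋂ i : ℤ, ⇑(f ^ i) '' S) = ∅)
    (hg1 : ⇑g '' S ⊆ S)
    (hg2 : (⋃ i : ℤ, ⇑(g ^ i) '' S) = Set.univ)
    (hg3 : (⋂ i : ℤ, ⇑(g ^ i) '' S) = ∅)
    (hcomm : f * g = g * f)
    (a b : ℤ) (ha : 0 < a) (hb : 0 < b) :
    (∀ i ∈ Set.Ico (0 : ℤ) a, ∀ j ∈ Set.Ico (0 : ℤ) a, i ≠ j →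
        Disjoint (crossSec f S i) (crossSec f S j)) ∧
    (∀ i ∈ Set.Ico (-b) (0 : ℤ), ∀ j ∈ Set.Ico (-b) (0 : ℤ), i ≠ j →
        Disjoint (crossSec g S i) (crossSec g S j)) ∧
    (∀ i ∈ Set.Ico (0 : ℤ) a, ∀ j ∈ Set.Ico (-b) (0 : ℤ),
        Disjoint (crossSec f S i) (crossSec g S j)) ∧
    (∀ x : I, ∃! y : I,
        y ∈ ((⋃ i ∈ Set.Ico (0 : ℤ) a, crossSec f S i) ∪
              ⋃ j ∈ Set.Ico (-b) (0 : ℤ), crossSec g S j) ∧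
        ∃ m : ℤ, ((f ^ a * g ^ b) ^ m) x = y) := by
  classical
  have ha' : (0:ℤ) ≤ a := ha.le
  have hb' : (0:ℤ) ≤ b := hb.le
  have hcomm0 : Commute f g := hcomm
  have disjF : ∀ p : Equiv.Perm I, ⇑p '' S ⊆ S → ∀ i j : ℤ, i < j →
      Disjoint (crossSec p S i) (crossSec p S j) := by
    intro p hp i j hij
    rw [Set.disjoint_left]
    rintro x ⟨hx1, hx2⟩ ⟨hx3, _⟩
    exact hx2 (zpow_anti' S p hp (by omega) hx3)
  refine ⟨?_, ?_, ?_, ?_⟩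
  · intro i _ j _ hij
    rcases lt_or_gt_of_ne hij with hlt | hgt
    · exact disjF f hf1 i j hlt
    · exact (disjF f hf1 j i hgt).symm
  · intro i _ j _ hij
    rcases lt_or_gt_of_ne hij with hlt | hgt
    · exact disjF g hg1 i j hlt
    · exact (disjF g hg1 j i hgt).symm
  · intro i hi j hj
    obtain ⟨hi1, hi2⟩ := hi
    obtain ⟨hj1, hj2⟩ := hj
    rw [Set.disjoint_left]
    rintro x ⟨hx1, _⟩ ⟨_, hx4⟩
    exact hx4 (S_subset_of_nonpos S g hg1 (by omega : j + 1 ≤ 0)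
      (mem_S_of_nonneg S f hf1 hi1 hx1))
  · intro x
    set h := f ^ a * g ^ b with hh
    have hstep_pt : ∀ m : ℤ, (h ^ (m + 1)) x = h ((h ^ m) x) := by
      intro m
      rw [show m + 1 = 1 + m by ring, zpow_add, zpow_one]
      rfl
    have hM_up : ∀ m : ℤ, (h ^ m) x ∈ S → (h ^ (m + 1)) x ∈ S := by
      intro m hm
      rw [hstep_pt]
      have h1 : (g ^ b) ((h ^ m) x) ∈ S :=
        mem_S_of_nonneg S g hg1 hb' ⟨_, hm, rfl⟩
      exact mem_S_of_nonneg S f hf1 ha' ⟨_, h1, rfl⟩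
    have hM_mono : ∀ m m' : ℤ, m ≤ m' → (h ^ m) x ∈ S → (h ^ m') x ∈ S := by
      intro m m' hmm' hm
      exact Int.le_induction hm (fun n _ hn => hM_up n hn) m' hmm'
    have hMne : ∃ m : ℤ, (h ^ m) x ∈ S := by
      have hx : x ∈ ⋃ i : ℤ, ⇑(f ^ i) '' S := by rw [hf2]; trivial
      obtain ⟨i, hi⟩ := Set.mem_iUnion.mp hx
      refine ⟨(((-i).toNat : ℕ) : ℤ), ?_⟩
      have h1 := iter_step S f g hg1 hcomm a b hb' i hi (-i).toNat
      rw [zpow_natCast]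
      refine mem_S_of_nonneg S f hf1 ?_ h1
      have h2 : (-i : ℤ) ≤ ((-i).toNat : ℤ) := Int.self_le_toNat _
      have h3 : (0:ℤ) ≤ ((-i).toNat : ℤ) := Int.natCast_nonneg _
      nlinarith [mul_nonneg h3 (by omega : (0:ℤ) ≤ a - 1)]
    have hMnotall : ∃ m : ℤ, (h ^ m) x ∉ S := by
      have hx : x ∉ ⋂ i : ℤ, ⇑(f ^ i) '' S := by rw [hf3]; exact Set.notMem_empty x
      obtain ⟨i, hi⟩ : ∃ i : ℤ, x ∉ ⇑(f ^ i) '' S := by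
        by_contra hc; push_neg at hc; exact hx (Set.mem_iInter.mpr hc)
      refine ⟨-((i.toNat : ℕ) : ℤ), fun hcon => ?_⟩
      have h0 : (h ^ (-((i.toNat : ℕ) : ℤ))) x ∈ ⇑(f ^ (0:ℤ)) '' S := by simpa using hcon
      have h1 := iter_step S f g hg1 hcomm a b hb' 0 h0 i.toNat
      have h2 : (h ^ (i.toNat : ℕ)) ((h ^ (-((i.toNat : ℕ) : ℤ))) x) = x := by
        rw [← zpow_natCast, ← Equiv.Perm.mul_apply, ← zpow_add]
        simp
      rw [h2] at h1
      have hle : i ≤ 0 + (i.toNat : ℤ) * a := by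
        have h3 : i ≤ (i.toNat : ℤ) := Int.self_le_toNat _
        have h4 : (0:ℤ) ≤ (i.toNat : ℤ) := Int.natCast_nonneg _
        nlinarith [mul_nonneg h4 (by omega : (0:ℤ) ≤ a - 1)]
      exact hi (zpow_anti' S f hf1 hle h1)
    obtain ⟨m₁, hm₁⟩ := hMnotall
    have hbdd : ∃ c : ℤ, ∀ m : ℤ, (h ^ m) x ∈ S → c ≤ m := by
      refine ⟨m₁ + 1, fun m hm => ?_⟩
      by_contra hc
      exact hm₁ (hM_mono m m₁ (by omega) hm)
    obtain ⟨m₀, hm₀S, hm₀least⟩ := Int.exists_least_of_bdd hbdd hMne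
    set z := (h ^ (m₀ - 1)) x with hz
    have hzS : z ∉ S := fun hc => by have := hm₀least _ hc; omega
    have hwz : (h ^ m₀) x = h z := by
      have := hstep_pt (m₀ - 1); rwa [sub_add_cancel] at this
    have claim_f : ∀ (m i : ℤ), i ∈ Set.Ico (0:ℤ) a → (h ^ m) x ∈ crossSec f S i →
        m = m₀ ∧ (g ^ b) z ∉ S := by
      intro m i hi hc
      obtain ⟨hi1, hi2⟩ := hi
      obtain ⟨hc1, hc2⟩ := hc
      have hmem : (h ^ m) x ∈ S := mem_S_of_nonneg S f hf1 hi1 hc1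
      have hm0m : m₀ ≤ m := hm₀least m hmem
      have hmeq : m = m₀ := by
        by_contra hne
        have hprev : (h ^ (m - 1)) x ∈ S := hM_mono m₀ (m-1) (by omega) hm₀S
        have h1 : (h ^ m) x = h ((h ^ (m-1)) x) := by
          have := hstep_pt (m - 1); rwa [sub_add_cancel] at this
        have h2 : (h ^ m) x ∈ ⇑(f ^ a) '' S := by
          rw [h1]
          have hgb : (g ^ b) ((h ^ (m-1)) x) ∈ S :=
            mem_S_of_nonneg S g hg1 hb' ⟨_, hprev, rfl⟩
          exact ⟨_, hgb, rfl⟩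
        exact hc2 (zpow_anti' S f hf1 (by omega : i + 1 ≤ a) h2)
      refine ⟨hmeq, fun hgbz => ?_⟩
      have h2 : (h ^ m₀) x ∈ ⇑(f ^ a) '' S := by
        rw [hwz]
        exact ⟨_, hgbz, rfl⟩
      rw [hmeq] at hc2
      exact hc2 (zpow_anti' S f hf1 (by omega : i + 1 ≤ a) h2)
    have claim_g : ∀ (m j : ℤ), j ∈ Set.Ico (-b) (0:ℤ) → (h ^ m) x ∈ crossSec g S j →
        m = m₀ - 1 ∧ (g ^ b) z ∈ S := by
      intro m j hj hc
      obtain ⟨hj1, hj2⟩ := hj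
      obtain ⟨hc1, hc2⟩ := hc
      have hnotS : (h ^ m) x ∉ S := fun hs =>
        hc2 (S_subset_of_nonpos S g hg1 (by omega : j + 1 ≤ 0) hs)
      have hmle : m ≤ m₀ - 1 := by
        by_contra hcon
        exact hnotS (hM_mono m₀ m (by omega) hm₀S)
      have hmeq : m = m₀ - 1 := by
        by_contra hne
        have hs1 := step_lemma S g f hf1 hcomm.symm b a ha' j hc1
        have hstep : (h ^ (m+1)) x ∈ S := by
          rw [hstep_pt m]
          have heq : h ((h ^ m) x) = (g ^ b * f ^ a) ((h ^ m) x) := by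
            rw [hh, (hcomm0.zpow_zpow a b).eq]
          rw [heq]
          exact mem_S_of_nonneg S g hg1 (by omega : (0:ℤ) ≤ j + b) hs1
        have := hm₀least _ hstep
        omega
      refine ⟨hmeq, ?_⟩
      rw [hmeq] at hc1
      have hc1' : z ∈ ⇑(g ^ (-b)) '' S := zpow_anti' S g hg1 hj1 hc1
      obtain ⟨s, hs, heq⟩ := hc1'
      have : (g ^ b) z = s := by
        rw [← heq, ← Equiv.Perm.mul_apply, ← zpow_add]
        simp
      rwa [this]
    by_cases hcase : (g ^ b) z ∈ S
    · have hzgb : z ∈ ⇑(g ^ (-b)) '' S := ⟨(g ^ b) z, hcase, by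
        rw [← Equiv.Perm.mul_apply, ← zpow_add]; simp⟩
      have hz0 : z ∉ ⇑(g ^ (0:ℤ)) '' S := by simpa using hzS
      obtain ⟨j, hj, hjc⟩ := boundary S g hg1 hzgb hz0
      refine ⟨z, ⟨Set.mem_union_right _ (Set.mem_biUnion hj hjc), m₀ - 1, rfl⟩, ?_⟩
      rintro y' ⟨hy'U, m, rfl⟩
      rcases hy'U with hy' | hy'
      · obtain ⟨i, hi, hci⟩ := Set.mem_iUnion₂.mp hy'
        exact absurd hcase (claim_f m i hi hci).2
      · obtain ⟨j', hj', hcj⟩ := Set.mem_iUnion₂.mp hy'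
        rw [(claim_g m j' hj' hcj).1]
    · have hw0 : (h ^ m₀) x ∈ ⇑(f ^ (0:ℤ)) '' S := by simpa using hm₀S
      have hwa : (h ^ m₀) x ∉ ⇑(f ^ a) '' S := by
        rintro ⟨s, hs, heq⟩
        apply hcase
        have h3 : (f ^ a) s = (f ^ a) ((g ^ b) z) := by
          rw [heq, hwz, hh]; rfl
        have h4 := (f ^ a).injective h3
        rwa [← h4]
      obtain ⟨i, hi, hic⟩ := boundary S f hf1 hw0 hwa
      refine ⟨(h ^ m₀) x, ⟨Set.mem_union_left _ (Set.mem_biUnion hi hic), m₀, rfl⟩, ?_⟩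
      rintro y' ⟨hy'U, m, rfl⟩
      rcases hy'U with hy' | hy'
      · obtain ⟨i', hi', hci⟩ := Set.mem_iUnion₂.mp hy'
        rw [(claim_f m i' hi' hci).1]
      · obtain ⟨j', hj', hcj⟩ := Set.mem_iUnion₂.mp hy'
        exact absurd (claim_g m j' hj' hcj).2 hcase
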